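/- Let λ = (√2/2)(1 + i) and c = i/(√2 (1 + i)). Then for all φ, ψ ∈ 𝓢(ℝ,ℂ): ∫_ℝ ( c ∫_ℝ conj(φ(x - s)) e^{-λ |s|} ds ) · (ψ(x) + i ψ''(x)) dx = ∫_ℝ conj(φ(x)) ψ(x) dx. (This is the resolution of the identity ∫ dx₀ ⟨φ, η_{x₀}⟩ ⟨η^{x₀}, ψ⟩ = ⟨φ, ψ⟩, i.e., ⟨T† φ, T⁻¹ ψ⟩ = ⟨φ, ψ⟩, for the second example.) -/

import Mathlib

open MeasureTheory

section Statement18Aux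

open Complex Filter Real Set in

private lemma normExpAux (l : ℂ) (r : ℝ) : ‖Complex.exp (-l * (r:ℂ))‖ = Real.exp (-(l.re * r)) := by
  rw [Complex.norm_exp]
  congr 1
  simp [Complex.mul_re]

open Complex Filter Real Set in
private lemma statement18_key (l c : ℂ) (hl2 : l^2 = Complex.I) (hre : 0 < l.re)
    (hc2 : c * (2 * Complex.I * l) = -1)
    (ψ ψ1 ψ2 : SchwartzMap ℝ ℂ) (h1 : deriv ⇑ψ = ⇑ψ1) (h2 : deriv ⇑ψ1 = ⇑ψ2) (u : ℝ) :
    c * ∫ x : ℝ, Complex.exp (-l * ((|x - u| : ℝ) : ℂ)) * (ψ x + Complex.I * ψ2 x) = ψ u := by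
  have hll : l * l = Complex.I := by rw [← pow_two]; exact hl2
  set S : ℝ → ℂ := fun x => ψ x + Complex.I * ψ2 x with hS
  have hSint : Integrable S := ψ.integrable.add (ψ2.integrable.const_mul _)
  have hScont : Continuous S := ψ.continuous.add (continuous_const.mul ψ2.continuous)
  have hdψ : ∀ x : ℝ, HasDerivAt (⇑ψ) (ψ1 x) x := fun x => by
    have h := ψ.differentiableAt.hasDerivAt (x := x)
    rwa [show deriv ⇑ψ x = ψ1 x from congrFun h1 x] at h
  have hdψ1 : ∀ x : ℝ, HasDerivAt (⇑ψ1) (ψ2 x) x := fun x => by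
    have h := ψ1.differentiableAt.hasDerivAt (x := x)
    rwa [show deriv ⇑ψ1 x = ψ2 x from congrFun h2 x] at h
  have hx1 : ∀ x : ℝ, HasDerivAt (fun x : ℝ => ((x:ℂ))) 1 x := fun x => by
    simpa using (hasDerivAt_id x).ofReal_comp
  -- global integrand
  set T : ℝ → ℂ := fun x => Complex.exp (-l * ((|x - u| : ℝ) : ℂ)) * S x with hT
  have hexpbd : ∀ r : ℝ, 0 ≤ r → ‖Complex.exp (-l * (r:ℂ))‖ ≤ 1 := fun r hr => by
    rw [normExpAux, Real.exp_le_one_iff]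
    simp only [neg_nonpos]
    positivity
  have hTint : Integrable T := by
    apply hSint.norm.mono'
    · exact (Complex.continuous_exp.comp (continuous_const.mul
        (Complex.continuous_ofReal.comp ((continuous_id.sub continuous_const).abs)))).mul hScont
          |>.aestronglyMeasurable
    · filter_upwards with x
      rw [hT, norm_mul]
      calc ‖Complex.exp (-l * ((|x - u| : ℝ) : ℂ))‖ * ‖S x‖
          ≤ 1 * ‖S x‖ := by
            apply mul_le_mul_of_nonneg_right (hexpbd _ (abs_nonneg _)) (norm_nonneg _)
        _ = ‖S x‖ := one_mul _
  -- plus side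
  set F : ℝ → ℂ := fun x => Complex.exp (-l * ((x:ℂ) - u)) * (Complex.I * l * ψ x + Complex.I * ψ1 x) with hF
  have hFD : ∀ x : ℝ, HasDerivAt F (Complex.exp (-l * ((x:ℂ) - u)) * S x) x := fun x => by
    have hexp : HasDerivAt (fun x : ℝ => Complex.exp (-l * ((x:ℂ) - u)))
        (Complex.exp (-l * ((x:ℂ) - u)) * (-l)) x := by
      simpa using (((hx1 x).sub_const (u:ℂ)).const_mul (-l)).cexp
    have hpoly : HasDerivAt (fun x : ℝ => Complex.I * l * ψ x + Complex.I * ψ1 x)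
        (Complex.I * l * ψ1 x + Complex.I * ψ2 x) x :=
      (((hdψ x).const_mul _).add ((hdψ1 x).const_mul _))
    have h := hexp.mul hpoly
    have e : Complex.exp (-l * ((x:ℂ) - u)) * S x
        = Complex.exp (-l * ((x:ℂ) - u)) * (-l) * (Complex.I * l * ψ x + Complex.I * ψ1 x)
          + Complex.exp (-l * ((x:ℂ) - u)) * (Complex.I * l * ψ1 x + Complex.I * ψ2 x) := by
      rw [hS]
      linear_combination (Complex.exp (-l * ((x:ℂ) - u)) * ψ x * Complex.I) * hll
        + (Complex.exp (-l * ((x:ℂ) - u)) * ψ x) * Complex.I_sq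
    rw [e]
    exact h
  -- bound for F
  obtain ⟨C, hC0, hCb⟩ : ∃ C, 0 ≤ C ∧ ∀ x : ℝ, ‖Complex.I * l * ψ x + Complex.I * ψ1 x‖ ≤ C := by
    set G : SchwartzMap ℝ ℂ := (Complex.I * l) • ψ + Complex.I • ψ1 with hG
    refine ⟨SchwartzMap.seminorm ℝ 0 0 G, apply_nonneg _ _, fun x => ?_⟩
    have := SchwartzMap.norm_le_seminorm ℝ G x
    simpa [hG, smul_eq_mul] using this
  have hFtend : Tendsto F atTop (nhds 0) := by
    apply squeeze_zero_norm (a := fun x => Real.exp (-(l.re * (x - u))) * C)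
    · intro x
      rw [hF, norm_mul]
      have : ((x:ℂ) - u) = ((x - u : ℝ) : ℂ) := by push_cast; ring
      rw [this, normExpAux]
      exact mul_le_mul_of_nonneg_left (hCb x) (Real.exp_nonneg _)
    · have h1' : Tendsto (fun x : ℝ => l.re * (x - u)) atTop atTop := by
        apply Tendsto.const_mul_atTop hre
        exact tendsto_atTop_add_const_right atTop (-u) tendsto_id
      have := Real.tendsto_exp_atBot.comp (tendsto_neg_atTop_atBot.comp h1')
      simpa using this.mul_const C
  have hFint : IntegrableOn (fun x : ℝ => Complex.exp (-l * ((x:ℂ) - u)) * S x) (Ioi u) := by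
    apply (hSint.norm.integrableOn).mono' 
    · exact ((Complex.continuous_exp.comp (continuous_const.mul (Complex.continuous_ofReal.sub continuous_const))).mul hScont).aestronglyMeasurable.restrict
    · apply (ae_restrict_iff' measurableSet_Ioi).2
      filter_upwards with x hx
      rw [norm_mul]
      have : ((x:ℂ) - u) = ((x - u : ℝ) : ℂ) := by push_cast; ring
      calc ‖Complex.exp (-l * ((x:ℂ) - u))‖ * ‖S x‖ ≤ 1 * ‖S x‖ := by
            apply mul_le_mul_of_nonneg_right _ (norm_nonneg _)
            rw [this]
            exact hexpbd _ (by simp at hx; linarith)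
        _ = ‖S x‖ := one_mul _
  have hIoi : ∫ x in Ioi u, T x = -(Complex.I * l * ψ u + Complex.I * ψ1 u) := by
    have heq : EqOn T (fun x => Complex.exp (-l * ((x:ℂ) - u)) * S x) (Ioi u) := by
      intro x hx
      simp only [T]
      congr 2
      have hxu : |x - u| = x - u := abs_of_pos (by simpa [sub_pos] using hx)
      rw [hxu]; push_cast; ring
    rw [setIntegral_congr_fun measurableSet_Ioi heq]
    have := integral_Ioi_of_hasDerivAt_of_tendsto' (f := F)
      (f' := fun x : ℝ => Complex.exp (-l * ((x:ℂ) - u)) * S x) (a := u)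
      (fun x _ => hFD x) hFint hFtend
    rw [this, hF]
    simp

  -- minus side
  set Fm : ℝ → ℂ := fun x => Complex.exp (-l * ((u:ℂ) - x)) * (-(Complex.I * l) * ψ x + Complex.I * ψ1 x) with hFm
  have hFmD : ∀ x : ℝ, HasDerivAt Fm (Complex.exp (-l * ((u:ℂ) - x)) * S x) x := fun x => by
    have hexp : HasDerivAt (fun x : ℝ => Complex.exp (-l * ((u:ℂ) - x)))
        (Complex.exp (-l * ((u:ℂ) - x)) * l) x := by
      have := (((hx1 x).const_sub (u:ℂ)).const_mul (-l)).cexp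
      simpa [mul_comm] using this
    have hpoly : HasDerivAt (fun x : ℝ => -(Complex.I * l) * ψ x + Complex.I * ψ1 x)
        (-(Complex.I * l) * ψ1 x + Complex.I * ψ2 x) x :=
      (((hdψ x).const_mul _).add ((hdψ1 x).const_mul _))
    have h := hexp.mul hpoly
    have e : Complex.exp (-l * ((u:ℂ) - x)) * S x
        = Complex.exp (-l * ((u:ℂ) - x)) * l * (-(Complex.I * l) * ψ x + Complex.I * ψ1 x)
          + Complex.exp (-l * ((u:ℂ) - x)) * (-(Complex.I * l) * ψ1 x + Complex.I * ψ2 x) := by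
      rw [hS]
      linear_combination (Complex.exp (-l * ((u:ℂ) - x)) * ψ x * Complex.I) * hll
        + (Complex.exp (-l * ((u:ℂ) - x)) * ψ x) * Complex.I_sq
    rw [e]
    exact h
  obtain ⟨C2, hC20, hC2b⟩ : ∃ C2, 0 ≤ C2 ∧ ∀ x : ℝ, ‖-(Complex.I * l) * ψ x + Complex.I * ψ1 x‖ ≤ C2 := by
    set G : SchwartzMap ℝ ℂ := (-(Complex.I * l)) • ψ + Complex.I • ψ1 with hG
    refine ⟨SchwartzMap.seminorm ℝ 0 0 G, apply_nonneg _ _, fun x => ?_⟩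
    have := SchwartzMap.norm_le_seminorm ℝ G x
    simpa [hG, smul_eq_mul] using this
  have hFmtend : Tendsto Fm atBot (nhds 0) := by
    apply squeeze_zero_norm (a := fun x => Real.exp (-(l.re * (u - x))) * C2)
    · intro x
      rw [hFm, norm_mul]
      have : ((u:ℂ) - x) = ((u - x : ℝ) : ℂ) := by push_cast; ring
      rw [this, normExpAux]
      exact mul_le_mul_of_nonneg_left (hC2b x) (Real.exp_nonneg _)
    · have h1' : Tendsto (fun x : ℝ => l.re * (u - x)) atBot atTop := by
        apply Tendsto.const_mul_atTop hre
        have : Tendsto (fun x : ℝ => -x) atBot atTop := tendsto_neg_atBot_atTop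
        exact (tendsto_atTop_add_const_left (f := fun x : ℝ => -x) atBot u this).congr fun x => (sub_eq_add_neg u x).symm
      have := Real.tendsto_exp_atBot.comp (tendsto_neg_atTop_atBot.comp h1')
      simpa using this.mul_const C2
  have hFmint : IntegrableOn (fun x : ℝ => Complex.exp (-l * ((u:ℂ) - x)) * S x) (Iic u) := by
    apply (hSint.norm.integrableOn).mono'
    · exact ((Complex.continuous_exp.comp (continuous_const.mul
        ((continuous_const.sub Complex.continuous_ofReal)))).mul hScont).aestronglyMeasurable.restrict
    · apply (ae_restrict_iff' measurableSet_Iic).2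
      filter_upwards with x hx
      rw [norm_mul]
      have hc : ((u:ℂ) - x) = ((u - x : ℝ) : ℂ) := by push_cast; ring
      calc ‖Complex.exp (-l * ((u:ℂ) - x))‖ * ‖S x‖ ≤ 1 * ‖S x‖ := by
            apply mul_le_mul_of_nonneg_right _ (norm_nonneg _)
            rw [hc]
            exact hexpbd _ (by simp at hx; linarith)
        _ = ‖S x‖ := one_mul _
  have hIic : ∫ x in Iic u, T x = -(Complex.I * l) * ψ u + Complex.I * ψ1 u := by
    have heq : EqOn T (fun x : ℝ => Complex.exp (-l * ((u:ℂ) - x)) * S x) (Iic u) := by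
      intro x hx
      simp only [T]
      congr 2
      have hxu : |x - u| = u - x := by
        rw [abs_of_nonpos (by simp at hx; linarith)]; ring
      rw [hxu]; push_cast; ring
    rw [setIntegral_congr_fun measurableSet_Iic heq]
    have := integral_Iic_of_hasDerivAt_of_tendsto' (f := Fm)
      (f' := fun x : ℝ => Complex.exp (-l * ((u:ℂ) - x)) * S x) (a := u)
      (fun x _ => hFmD x) hFmint hFmtend
    rw [this, hFm]
    simp
  -- combine
  have hsplit : (∫ x : ℝ, T x) = (∫ x in Iic u, T x) + ∫ x in Ioi u, T x :=
    (intervalIntegral.integral_Iic_add_Ioi hTint.integrableOn hTint.integrableOn).symm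
  have : (∫ x : ℝ, Complex.exp (-l * ((|x - u| : ℝ) : ℂ)) * (ψ x + Complex.I * ψ2 x)) = ∫ x : ℝ, T x := rfl
  rw [this, hsplit, hIic, hIoi]
  linear_combination (-(ψ u)) * hc2

end Statement18Aux

open Complex Filter Real Set in

/-- Resolution of the identity `∫ dx₀ ⟨φ, η_{x₀}⟩⟨η^{x₀}, ψ⟩ = ⟨φ, ψ⟩`, i.e.
`⟨T† φ, T⁻¹ ψ⟩ = ⟨φ, ψ⟩`, in the second example: with `λ = (√2/2)(1+i)`,
`c = i/(√2(1+i))`, `T⁻¹ψ = ψ + iψ''` and `conj((T†φ)(x)) = c ∫ conj(φ(x-s)) e^{-λ|s|} ds`,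
one has `∫ (c ∫ conj(φ(x-s)) e^{-λ|s|} ds)(ψ(x) + iψ''(x)) dx = ∫ conj(φ(x)) ψ(x) dx`. -/
theorem statement18 (l c : ℂ)
    (hl : l = (Real.sqrt 2 / 2 : ℝ) * (1 + Complex.I))
    (hc : c = Complex.I / ((Real.sqrt 2 : ℝ) * (1 + Complex.I))) :
    ∀ φ ψ : SchwartzMap ℝ ℂ,
      ∫ x : ℝ,
          (c * ∫ s : ℝ, (starRingEnd ℂ) (φ (x - s)) * Complex.exp (-l * ((|s| : ℝ) : ℂ)))
            * (ψ x + Complex.I * deriv (deriv (⇑ψ)) x)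
        = ∫ x : ℝ, (starRingEnd ℂ) (φ x) * ψ x := by
  -- constants
  have hl2 : l^2 = Complex.I := by
    have e1 : ((Real.sqrt 2 / 2 : ℝ) : ℂ)^2 = (1/2 : ℂ) := by
      norm_cast
      rw [div_pow, Real.sq_sqrt] <;> norm_num
    have e2 : (1 + Complex.I)^2 = 2*Complex.I := by
      rw [pow_two]; ring_nf; rw [Complex.I_sq]; ring
    rw [hl, mul_pow, e1, e2]; ring
  have hre : 0 < l.re := by
    rw [hl]
    simp only [Complex.mul_re, Complex.ofReal_re, Complex.ofReal_im, Complex.add_re,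
      Complex.one_re, Complex.I_re, Complex.add_im, Complex.one_im, Complex.I_im]
    norm_num
  have hc2 : c * (2 * Complex.I * l) = -1 := by
    have hr : Real.sqrt 2 * Real.sqrt 2 = 2 := Real.mul_self_sqrt (by norm_num)
    have hs2 : ((Real.sqrt 2 : ℝ):ℂ) * ((Real.sqrt 2 : ℝ):ℂ) = 2 := by exact_mod_cast hr
    have hs : ((Real.sqrt 2 : ℝ):ℂ) ≠ 0 := by norm_cast; positivity
    have hi : (1 + Complex.I) ≠ 0 := by
      intro h
      have := congrArg Complex.re h
      simp at this
    rw [hl, hc]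
    field_simp
    ring_nf
    rw [Complex.I_sq]
    ring_nf
    push_cast
    ring
  intro φ ψ
  set ψ1 := SchwartzMap.derivCLM ℝ ℂ ψ with hψ1
  set ψ2 := SchwartzMap.derivCLM ℝ ℂ ψ1 with hψ2
  have h1 : deriv ⇑ψ = ⇑ψ1 := funext fun x => (SchwartzMap.derivCLM_apply (𝕜 := ℝ) ψ x).symm
  have h2 : deriv ⇑ψ1 = ⇑ψ2 := funext fun x => (SchwartzMap.derivCLM_apply (𝕜 := ℝ) ψ1 x).symm
  have hdd : deriv (deriv ⇑ψ) = ⇑ψ2 := by rw [h1, h2]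
  rw [show (∫ x : ℝ, (c * ∫ s : ℝ, (starRingEnd ℂ) (φ (x - s)) * Complex.exp (-l * ((|s| : ℝ) : ℂ)))
            * (ψ x + Complex.I * deriv (deriv (⇑ψ)) x))
      = ∫ x : ℝ, (c * ∫ s : ℝ, (starRingEnd ℂ) (φ (x - s)) * Complex.exp (-l * ((|s| : ℝ) : ℂ)))
            * (ψ x + Complex.I * ψ2 x) from by rw [hdd]]
  set S : ℝ → ℂ := fun x => ψ x + Complex.I * ψ2 x with hS
  have hSint : Integrable S := ψ.integrable.add (ψ2.integrable.const_mul _)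
  have hScont : Continuous S := ψ.continuous.add (continuous_const.mul ψ2.continuous)
  -- substitution in inner integral
  have hsub : ∀ x : ℝ, (∫ s : ℝ, (starRingEnd ℂ) (φ (x - s)) * Complex.exp (-l * ((|s| : ℝ) : ℂ)))
      = ∫ v : ℝ, (starRingEnd ℂ) (φ v) * Complex.exp (-l * ((|x - v| : ℝ) : ℂ)) := by
    intro x
    rw [← integral_sub_left_eq_self
      (fun v : ℝ => (starRingEnd ℂ) (φ v) * Complex.exp (-l * ((|x - v| : ℝ) : ℂ))) volume x]
    congr 1
    funext s
    simp
  simp_rw [hsub]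
  -- pull out c and rearrange
  have hre1 : ∀ x : ℝ,
      (c * ∫ v : ℝ, (starRingEnd ℂ) (φ v) * Complex.exp (-l * ((|x - v| : ℝ) : ℂ))) * S x
      = c * ∫ v : ℝ, (starRingEnd ℂ) (φ v) * (Complex.exp (-l * ((|x - v| : ℝ) : ℂ)) * S x) := by
    intro x
    rw [mul_assoc, ← integral_mul_const]
    simp_rw [mul_assoc]
  simp_rw [show ∀ x, ψ x + Complex.I * ψ2 x = S x from fun _ => rfl, hre1]
  rw [integral_const_mul]
  -- Fubini
  have hFub : Integrable (Function.uncurry fun (x v : ℝ) =>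
      (starRingEnd ℂ) (φ v) * (Complex.exp (-l * ((|x - v| : ℝ) : ℂ)) * S x))
      (volume.prod volume) := by
    apply Integrable.mono' ((hSint.norm).mul_prod (φ.integrable.norm))
    · apply Continuous.aestronglyMeasurable
      apply Continuous.mul
      · exact Complex.continuous_conj.comp (φ.continuous.comp continuous_snd)
      · apply Continuous.mul
        · exact Complex.continuous_exp.comp (continuous_const.mul
            (Complex.continuous_ofReal.comp ((continuous_fst.sub continuous_snd).abs)))
        · exact hScont.comp continuous_fst
    · filter_upwards with p
      simp only [Function.uncurry, norm_mul, RCLike.norm_conj]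
      have hexpbd : ‖Complex.exp (-l * ((|p.1 - p.2| : ℝ) : ℂ))‖ ≤ 1 := by
        rw [normExpAux, Real.exp_le_one_iff]
        simp only [neg_nonpos]
        positivity
      calc ‖φ p.2‖ * (‖Complex.exp (-l * ((|p.1 - p.2| : ℝ) : ℂ))‖ * ‖S p.1‖)
          ≤ ‖φ p.2‖ * (1 * ‖S p.1‖) := by
            apply mul_le_mul_of_nonneg_left _ (norm_nonneg _)
            exact mul_le_mul_of_nonneg_right hexpbd (norm_nonneg _)
        _ = ‖S p.1‖ * ‖φ p.2‖ := by ring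
  rw [integral_integral_swap hFub]
  have hkey : ∀ v : ℝ, (c * ∫ x : ℝ, Complex.exp (-l * ((|x - v| : ℝ) : ℂ)) * S x) = ψ v :=
    fun v => statement18_key l c hl2 hre hc2 ψ ψ1 ψ2 h1 h2 v
  rw [← integral_const_mul]
  congr 1
  funext v
  rw [integral_const_mul, mul_left_comm, hkey v]
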